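/- Let 0 < ξ ≤ 10⁻³ and let G be a bipartite graph with bipartition {V₁, V₂}, |V₁| = |V₂| = (2 + 8ξ)k′ (with k′ sufficiently large) and minimum degree δ(G) ≥ (7/8 + ξ)(2 + 8ξ)k′, whose edges are 2-colored red and blue. Let C be the vertex set of a connected component of the spanning subgraph of red edges. If for some s ∈ {1, 2} both |C ∩ V_s| ≥ (1 + 4ξ)k′ and |V_{3−s} \ C| ≥ (1 + 4ξ)k′, then the bipartite graph of blue edges of G between C ∩ V_s and V_{3−s} \ C contains a connected matching saturating at least (2 + 8ξ)k′ vertices. -/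

import Mathlib

/-- The spanning subgraph of `G` consisting of the edges with color `i`,
given an edge coloring `χ` (on pairs of vertices) with `r` colors. -/
def colorSubgraph {V : Type*} {r : ℕ} (G : SimpleGraph V) (χ : Sym2 V → Fin r) (i : Fin r) :
    SimpleGraph V where
  Adj u v := G.Adj u v ∧ χ s(u, v) = i
  symm := ⟨fun u v h => ⟨h.1.symm, by rw [Sym2.eq_swap]; exact h.2⟩⟩
  loopless := ⟨fun u h => G.loopless.irrefl u h.1⟩

/-- `G` contains a cycle of length `m` (on `m` vertices) as a subgraph. -/
def HasCycleLength {V : Type*} (G : SimpleGraph V) (m : ℕ) : Prop :=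
  ∃ (v : V) (w : G.Walk v v), w.IsCycle ∧ w.length = m

/-- `G` contains a connected matching (all of whose edges lie in one connected
component of `G`) saturating at least `b` vertices. -/
def HasConnMatching {V : Type*} (G : SimpleGraph V) (b : ℝ) : Prop :=
  ∃ M : G.Subgraph, M.IsMatching ∧
    (∀ u ∈ M.verts, ∀ v ∈ M.verts, G.Reachable u v) ∧ b ≤ (M.verts.ncard : ℝ)

/-- The bipartite graph of edges of `H` with one endpoint in `A` and the other in `B`. -/
def betweenGraph {V : Type*} (H : SimpleGraph V) (A B : Set V) : SimpleGraph V where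
  Adj u v := H.Adj u v ∧ ((u ∈ A ∧ v ∈ B) ∨ (u ∈ B ∧ v ∈ A))
  symm := ⟨fun u v h => ⟨h.1.symm, by tauto⟩⟩
  loopless := ⟨fun u h => H.loopless.irrefl u h.1⟩

open Finset in
lemma key_conn_matching {V : Type*} [Fintype V] [DecidableEq V] (H : SimpleGraph V)
    (A B : Finset V) (hAB : Disjoint A B) (D m : ℕ)
    (hA : ∀ a ∈ A, ∃ s ⊆ B, (∀ b ∈ s, H.Adj a b) ∧ B.card ≤ s.card + D)
    (hB : ∀ b ∈ B, ∃ s ⊆ A, (∀ a ∈ s, H.Adj b a) ∧ A.card ≤ s.card + D)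
    (hDA : 2 * D < A.card) (hDB : 2 * D < B.card)
    (hmA : m ≤ A.card) (hmB : m ≤ B.card) :
    ∃ M : H.Subgraph, M.IsMatching ∧
      (∀ u ∈ M.verts, ∀ v ∈ M.verts, H.Reachable u v) ∧ M.verts.ncard = 2 * m := by
  classical
  -- reachability between any two vertices of A ∪ B
  have commonAA : ∀ x ∈ A, ∀ y ∈ A, ∃ b ∈ B, H.Adj x b ∧ H.Adj y b := by
    intro x hx y hy
    obtain ⟨s, hsB, hsadj, hscard⟩ := hA x hx
    obtain ⟨t, htB, htadj, htcard⟩ := hA y hy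
    have hun : (s ∪ t).card ≤ B.card := card_le_card (union_subset hsB htB)
    have hie := Finset.card_inter_add_card_union s t
    have : 0 < (s ∩ t).card := by omega
    obtain ⟨b, hb⟩ := Finset.card_pos.mp this
    rw [Finset.mem_inter] at hb
    exact ⟨b, hsB hb.1, hsadj b hb.1, htadj b hb.2⟩
  have commonBB : ∀ x ∈ B, ∀ y ∈ B, ∃ a ∈ A, H.Adj x a ∧ H.Adj y a := by
    intro x hx y hy
    obtain ⟨s, hsB, hsadj, hscard⟩ := hB x hx
    obtain ⟨t, htB, htadj, htcard⟩ := hB y hy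
    have hun : (s ∪ t).card ≤ A.card := card_le_card (union_subset hsB htB)
    have hie := Finset.card_inter_add_card_union s t
    have : 0 < (s ∩ t).card := by omega
    obtain ⟨a, ha⟩ := Finset.card_pos.mp this
    rw [Finset.mem_inter] at ha
    exact ⟨a, hsB ha.1, hsadj a ha.1, htadj a ha.2⟩
  have nbrB : ∀ y ∈ B, ∃ a ∈ A, H.Adj y a := by
    intro y hy
    obtain ⟨s, hsA, hsadj, hscard⟩ := hB y hy
    have : 0 < s.card := by omega
    obtain ⟨a, ha⟩ := Finset.card_pos.mp this
    exact ⟨a, hsA ha, hsadj a ha⟩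
  have reach : ∀ u ∈ (A : Set V) ∪ (B : Set V), ∀ v ∈ (A : Set V) ∪ (B : Set V),
      H.Reachable u v := by
    have reachA : ∀ u ∈ A, ∀ v ∈ A, H.Reachable u v := by
      intro u hu v hv
      obtain ⟨b, _, h1, h2⟩ := commonAA u hu v hv
      exact h1.reachable.trans h2.symm.reachable
    have reachBA : ∀ u ∈ B, ∀ v ∈ A, H.Reachable u v := by
      intro u hu v hv
      obtain ⟨a, ha, h1⟩ := nbrB u hu
      exact h1.reachable.trans (reachA a ha v hv)
    intro u hu v hv
    rcases hu with hu | hu <;> rcases hv with hv | hv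
    · exact reachA u hu v hv
    · exact (reachBA v hv u hu).symm
    · exact reachBA u hu v hv
    · obtain ⟨a, ha, h1, h2⟩ := commonBB u hu v hv
      exact h1.reachable.trans h2.symm.reachable
  -- choose A' of size m and a Hall matching from it into B
  obtain ⟨A', hA'sub, hA'card⟩ := Finset.exists_subset_card_eq hmA
  have hall : ∀ S : Finset {x // x ∈ A'},
      S.card ≤ ({b | ∃ a ∈ S, b ∈ B ∧ H.Adj a.1 b} : Finset V).card := by
    intro S
    rcases S.eq_empty_or_nonempty with rfl | ⟨a, haS⟩
    · simp
    set T : Finset V := {b | ∃ a ∈ S, b ∈ B ∧ H.Adj a.1 b} with hT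
    have hTB : T ⊆ B := by
      intro b hb
      simp only [hT, Finset.mem_filter] at hb
      obtain ⟨_, _, _, hbB, _⟩ := hb
      exact hbB
    have haA : (a : V) ∈ A := hA'sub a.2
    obtain ⟨s, hsB, hsadj, hscard⟩ := hA a haA
    have hsT : s ⊆ T := by
      intro b hb
      simp only [hT, Finset.mem_filter, Finset.mem_univ, true_and]
      exact ⟨a, haS, hsB hb, hsadj b hb⟩
    have hTcard : B.card ≤ T.card + D := le_trans hscard (by
      have := card_le_card hsT; omega)
    by_cases hc : S.card + D ≤ B.card
    · omega
    · -- big case: every b ∈ B has a neighbor in S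
      have hSm : S.card ≤ m := by
        have := Finset.card_le_univ S
        rwa [Fintype.card_coe, hA'card] at this
      have hBT : B ⊆ T := by
        intro b hb
        obtain ⟨s', hs'A, hs'adj, hs'card⟩ := hB b hb
        by_contra hbT
        have hnone : ∀ a' : {x // x ∈ A'}, a' ∈ S → ¬ H.Adj a'.1 b := by
          intro a' ha' hadj
          exact hbT (by
            simp only [hT, Finset.mem_filter, Finset.mem_univ, true_and]
            exact ⟨a', ha', hb, hadj⟩)
        have hdisj : Disjoint (S.image Subtype.val) s' := by
          rw [Finset.disjoint_left]
          rintro x hx hx'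
          obtain ⟨a', ha'S, rfl⟩ := Finset.mem_image.mp hx
          exact hnone a' ha'S (hs'adj _ hx').symm
        have himA : S.image Subtype.val ⊆ A := by
          intro x hx
          obtain ⟨a', _, rfl⟩ := Finset.mem_image.mp hx
          exact hA'sub a'.2
        have hcardim : (S.image Subtype.val).card = S.card :=
          Finset.card_image_of_injective _ Subtype.val_injective
        have : (S.image Subtype.val).card + s'.card ≤ A.card := by
          rw [← Finset.card_union_of_disjoint hdisj]
          exact card_le_card (union_subset himA hs'A)
        omega
      have := card_le_card hBT
      omega
  obtain ⟨f, hfinj, hf⟩ :=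
    (Fintype.all_card_le_filter_rel_iff_exists_injective
      (fun (a : {x // x ∈ A'}) (b : V) => b ∈ B ∧ H.Adj a.1 b)).mp hall
  have hfB : ∀ a, f a ∈ B := fun a => (hf a).1
  have hfadj : ∀ a, H.Adj a.1 (f a) := fun a => (hf a).2
  have hA'B : ∀ x : V, x ∈ A' → x ∉ B := fun x hx =>
    Finset.disjoint_left.mp hAB (hA'sub hx)
  -- build the matching subgraph
  refine ⟨⟨(A' : Set V) ∪ Set.range (fun a : {x // x ∈ A'} => f a),
      fun u v => (∃ a : {x // x ∈ A'}, u = a.1 ∧ v = f a) ∨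
        (∃ a : {x // x ∈ A'}, v = a.1 ∧ u = f a), ?_, ?_, ?_⟩, ?_, ?_, ?_⟩
  · rintro u v (⟨a, rfl, rfl⟩ | ⟨a, rfl, rfl⟩)
    · exact hfadj a
    · exact (hfadj a).symm
  · rintro u v (⟨a, rfl, _⟩ | ⟨a, _, rfl⟩)
    · exact Or.inl a.2
    · exact Or.inr ⟨a, rfl⟩
  · refine ⟨?_⟩; rintro u v (⟨a, h1, h2⟩ | ⟨a, h1, h2⟩)
    · exact Or.inr ⟨a, h1, h2⟩
    · exact Or.inl ⟨a, h1, h2⟩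
  · -- IsMatching
    rintro v (hv | ⟨a, rfl⟩)
    · refine ⟨f ⟨v, hv⟩, Or.inl ⟨⟨v, hv⟩, rfl, rfl⟩, ?_⟩
      rintro w (⟨a, ha1, rfl⟩ | ⟨a, ha1, ha2⟩)
      · have hav : a = ⟨v, hv⟩ := Subtype.ext ha1.symm
        rw [hav]
      · exact absurd (ha2 ▸ hfB a) (hA'B v hv)
    · refine ⟨(a : V), Or.inr ⟨a, rfl, rfl⟩, ?_⟩
      rintro w (⟨a', ha1, ha2⟩ | ⟨a', ha1, ha2⟩)
      · exact absurd (ha1 ▸ hfB a) (hA'B _ a'.2)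
      · rw [ha1, hfinj ha2]
  · -- connectivity
    intro u hu v hv
    have hsub : ((A' : Set V) ∪ Set.range (fun a : {x // x ∈ A'} => f a)) ⊆
        (A : Set V) ∪ (B : Set V) := by
      rintro x (hx | ⟨a, rfl⟩)
      · exact Or.inl (hA'sub hx)
      · exact Or.inr (hfB a)
    exact reach u (hsub hu) v (hsub hv)
  · -- cardinality
    have hrange : Set.range (fun a : {x // x ∈ A'} => f a) =
        ((Finset.univ.image (fun a : {x // x ∈ A'} => f a)) : Finset V) := by
      ext x
      simp only [Finset.coe_image, Set.mem_range, Set.mem_image, Finset.mem_coe,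
        Finset.mem_attach, true_and]
      constructor
      · rintro ⟨a, rfl⟩; exact ⟨a, Finset.mem_attach _ a, rfl⟩
      · rintro ⟨a, _, rfl⟩; exact ⟨a, rfl⟩
    have hdisj : Disjoint (A' : Set V) (Set.range (fun a : {x // x ∈ A'} => f a)) := by
      rw [Set.disjoint_left]
      rintro x hx ⟨a, rfl⟩
      exact hA'B _ hx (hfB a)
    rw [Set.ncard_union_eq hdisj (Set.toFinite _) (Set.toFinite _), hrange,
      Set.ncard_coe_finset, Set.ncard_coe_finset,
      Finset.card_image_of_injective _ hfinj, Finset.card_univ, Fintype.card_coe, hA'card]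
    omega

/-- Claim: with `C` the vertex set of a red component, if `|C ∩ V_s| ≥ (1+4ξ)k'` and
`|V_{3−s} \ C| ≥ (1+4ξ)k'`, then the blue bipartite graph between `C ∩ V_s` and
`V_{3−s} \ C` contains a connected matching saturating at least `(2+8ξ)k'` vertices. -/
theorem blue_connected_matching_across_red_component (ξ : ℝ) (hξ0 : 0 < ξ)
    (hξ1 : ξ ≤ 1 / 1000) :
    ∃ K₀ : ℝ, ∀ k' : ℝ, K₀ ≤ k' → ∀ N : ℕ, (N : ℝ) = (2 + 8 * ξ) * k' →
      ∀ G : SimpleGraph (Fin N ⊕ Fin N), G ≤ completeBipartiteGraph (Fin N) (Fin N) →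
      (∀ v, (7 / 8 + ξ) * ((2 + 8 * ξ) * k') ≤ ((G.neighborSet v).ncard : ℝ)) →
      ∀ χ : Sym2 (Fin N ⊕ Fin N) → Fin 2,
      ∀ c : (colorSubgraph G χ 0).ConnectedComponent,
      ∀ Vs Vt : Set (Fin N ⊕ Fin N),
        ((Vs = Set.range Sum.inl ∧ Vt = Set.range Sum.inr) ∨
          (Vs = Set.range Sum.inr ∧ Vt = Set.range Sum.inl)) →
        (1 + 4 * ξ) * k' ≤ (((c.supp ∩ Vs)).ncard : ℝ) →
        (1 + 4 * ξ) * k' ≤ ((Vt \ c.supp).ncard : ℝ) →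
        HasConnMatching (betweenGraph (colorSubgraph G χ 1) (c.supp ∩ Vs) (Vt \ c.supp))
          ((2 + 8 * ξ) * k') := by
  classical
  refine ⟨100, ?_⟩
  intro k' hk' N hN G hGle hdeg χ c Vs Vt hVst hAc hBc
  have hNR : (200 : ℝ) ≤ (N : ℝ) := by rw [hN]; nlinarith
  have hN200 : 200 ≤ N := by exact_mod_cast hNR
  set D : ℕ := N / 8 with hD
  set m : ℕ := (N + 1) / 2 with hm
  set Aset : Set (Fin N ⊕ Fin N) := c.supp ∩ Vs with hAset
  set Bset : Set (Fin N ⊕ Fin N) := Vt \ c.supp with hBset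
  -- side facts, uniform over the two cases
  have hside : Vt.ncard = N ∧ Vs.ncard = N ∧
      (∀ u ∈ Vs, ∀ v, G.Adj u v → v ∈ Vt) ∧ (∀ u ∈ Vt, ∀ v, G.Adj u v → v ∈ Vs) := by
    have hcardl : (Set.range (Sum.inl : Fin N → Fin N ⊕ Fin N)).ncard = N := by
      rw [← Nat.card_coe_set_eq, Nat.card_range_of_injective Sum.inl_injective,
        Nat.card_eq_fintype_card, Fintype.card_fin]
    have hcardr : (Set.range (Sum.inr : Fin N → Fin N ⊕ Fin N)).ncard = N := by
      rw [← Nat.card_coe_set_eq, Nat.card_range_of_injective Sum.inr_injective,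
        Nat.card_eq_fintype_card, Fintype.card_fin]
    have hl : ∀ u ∈ Set.range (Sum.inl : Fin N → Fin N ⊕ Fin N), ∀ v, G.Adj u v →
        v ∈ Set.range (Sum.inr : Fin N → Fin N ⊕ Fin N) := by
      rintro u ⟨a, rfl⟩ v hadj
      have h := hGle hadj
      simp only [completeBipartiteGraph_adj, Sum.isLeft_inl, Sum.isRight_inl, true_and,
        false_and, or_false] at h
      rcases h with hr | ⟨hfalse, _⟩
      · obtain ⟨y, rfl⟩ := Sum.isRight_iff.mp hr
        exact ⟨y, rfl⟩
      · exact absurd hfalse (by simp)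
    have hr : ∀ u ∈ Set.range (Sum.inr : Fin N → Fin N ⊕ Fin N), ∀ v, G.Adj u v →
        v ∈ Set.range (Sum.inl : Fin N → Fin N ⊕ Fin N) := by
      rintro u ⟨a, rfl⟩ v hadj
      have h := hGle hadj
      simp only [completeBipartiteGraph_adj, Sum.isLeft_inr, Sum.isRight_inr, true_and,
        false_and, and_true, false_or] at h
      rcases h with ⟨hfalse, _⟩ | hl
      · exact absurd hfalse (by simp)
      · obtain ⟨y, rfl⟩ := Sum.isLeft_iff.mp hl
        exact ⟨y, rfl⟩
    rcases hVst with ⟨rfl, rfl⟩ | ⟨rfl, rfl⟩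
    · exact ⟨hcardr, hcardl, hl, hr⟩
    · exact ⟨hcardl, hcardr, hr, hl⟩
  obtain ⟨hVtN, hVsN, hsVs, hsVt⟩ := hside
  -- nonneighbour counting
  have nonnbr : ∀ (X Y : Set (Fin N ⊕ Fin N)), Y.ncard = N →
      (∀ u ∈ X, ∀ v, G.Adj u v → v ∈ Y) →
      ∀ u ∈ X, (Y \ G.neighborSet u).ncard ≤ D := by
    intro X Y hY hXY u hu
    have hsub : G.neighborSet u ⊆ Y := fun v hv => hXY u hu v hv
    have hdiff : (Y \ G.neighborSet u).ncard = Y.ncard - (G.neighborSet u).ncard :=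
      Set.ncard_diff hsub (Set.toFinite _)
    have hle : (G.neighborSet u).ncard ≤ N := by
      have := Set.ncard_le_ncard hsub (Set.toFinite _)
      omega
    have h8 : 8 * (Y \ G.neighborSet u).ncard ≤ N := by
      rw [hdiff, hY]
      have hd : (7 / 8 + ξ) * (N : ℝ) ≤ ((G.neighborSet u).ncard : ℝ) := by
        rw [hN]; exact hdeg u
      have hcast : ((N - (G.neighborSet u).ncard : ℕ) : ℝ) =
          (N : ℝ) - ((G.neighborSet u).ncard : ℝ) := Nat.cast_sub hle
      have h8' : (8 : ℝ) * ((N - (G.neighborSet u).ncard : ℕ) : ℝ) ≤ (N : ℝ) := by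
        rw [hcast]; nlinarith [Nat.cast_nonneg (α := ℝ) N]
      exact_mod_cast h8'
    omega
  -- all G-edges between Aset and Bset are blue edges of the between graph
  have blue : ∀ a ∈ Aset, ∀ b ∈ Bset, G.Adj a b →
      (betweenGraph (colorSubgraph G χ 1) Aset Bset).Adj a b := by
    rintro a ⟨hac, has⟩ b ⟨hbt, hbc⟩ hadj
    have h01 : ∀ i : Fin 2, i = 0 ∨ i = 1 := by decide
    have hχ : χ s(a, b) = 1 := by
      rcases h01 (χ s(a, b)) with h0 | h1
      · exfalso
        have hradj : (colorSubgraph G χ 0).Adj a b := (show G.Adj a b ∧ χ s(a, b) = 0 from ⟨hadj, h0⟩)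
        have hbm : b ∈ c.supp := by
          rw [SimpleGraph.ConnectedComponent.mem_supp_iff] at hac ⊢
          rw [← hac]
          exact (SimpleGraph.ConnectedComponent.connectedComponentMk_eq_of_adj hradj).symm
        exact hbc hbm
      · exact h1
    exact (show (colorSubgraph G χ 1).Adj a b ∧ ((a ∈ Aset ∧ b ∈ Bset) ∨ (a ∈ Bset ∧ b ∈ Aset)) from
      ⟨(show G.Adj a b ∧ χ s(a, b) = 1 from ⟨hadj, hχ⟩), Or.inl ⟨⟨hac, has⟩, hbt, hbc⟩⟩)
  set H := betweenGraph (colorSubgraph G χ 1) Aset Bset with hH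
  set A : Finset (Fin N ⊕ Fin N) := (Set.toFinite Aset).toFinset with hAdef
  set B : Finset (Fin N ⊕ Fin N) := (Set.toFinite Bset).toFinset with hBdef
  have hAmem : ∀ x, x ∈ A ↔ x ∈ Aset := fun x => Set.Finite.mem_toFinset _
  have hBmem : ∀ x, x ∈ B ↔ x ∈ Bset := fun x => Set.Finite.mem_toFinset _
  have hAcard : A.card = Aset.ncard := (Set.ncard_eq_toFinset_card Aset (Set.toFinite _)).symm
  have hBcard : B.card = Bset.ncard := (Set.ncard_eq_toFinset_card Bset (Set.toFinite _)).symm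
  have hNA : N ≤ 2 * A.card := by
    have h2 : ((N : ℝ)) ≤ 2 * (A.card : ℝ) := by
      rw [hAcard, hN]; nlinarith
    exact_mod_cast h2
  have hNB : N ≤ 2 * B.card := by
    have h2 : ((N : ℝ)) ≤ 2 * (B.card : ℝ) := by
      rw [hBcard, hN]; nlinarith
    exact_mod_cast h2
  have hAB : Disjoint A B := by
    rw [Finset.disjoint_left]
    intro x hx hx'
    exact ((hBmem x).mp hx').2 ((hAmem x).mp hx).1
  have hAdeg : ∀ a ∈ A, ∃ s ⊆ B, (∀ b ∈ s, H.Adj a b) ∧ B.card ≤ s.card + D := by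
    intro a ha
    have haA : a ∈ Aset := (hAmem a).mp ha
    refine ⟨B.filter (fun b => G.Adj a b), Finset.filter_subset _ _, ?_, ?_⟩
    · intro b hb
      rw [Finset.mem_filter] at hb
      exact blue a haA b ((hBmem b).mp hb.1) hb.2
    · have hsubd : B \ B.filter (fun b => G.Adj a b) ⊆
          (Set.toFinite (Vt \ G.neighborSet a)).toFinset := by
        intro b hb
        rw [Finset.mem_sdiff, Finset.mem_filter] at hb
        rw [Set.Finite.mem_toFinset]
        have hbB := (hBmem b).mp hb.1
        exact ⟨hbB.1, fun hnb => hb.2 ⟨hb.1, hnb⟩⟩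
      have h1 : (B \ B.filter (fun b => G.Adj a b)).card ≤ D := by
        calc (B \ B.filter (fun b => G.Adj a b)).card
            ≤ ((Set.toFinite (Vt \ G.neighborSet a)).toFinset).card :=
              Finset.card_le_card hsubd
          _ = (Vt \ G.neighborSet a).ncard :=
              (Set.ncard_eq_toFinset_card _ (Set.toFinite _)).symm
          _ ≤ D := nonnbr Vs Vt hVtN hsVs a haA.2
      have h2 := Finset.card_sdiff_add_card_eq_card
        (Finset.filter_subset (fun b => G.Adj a b) B)
      omega
  have hBdeg : ∀ b ∈ B, ∃ s ⊆ A, (∀ a ∈ s, H.Adj b a) ∧ A.card ≤ s.card + D := by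
    intro b hb
    have hbB : b ∈ Bset := (hBmem b).mp hb
    refine ⟨A.filter (fun a => G.Adj b a), Finset.filter_subset _ _, ?_, ?_⟩
    · intro a ha
      rw [Finset.mem_filter] at ha
      exact (blue a ((hAmem a).mp ha.1) b hbB ha.2.symm).symm
    · have hsubd : A \ A.filter (fun a => G.Adj b a) ⊆
          (Set.toFinite (Vs \ G.neighborSet b)).toFinset := by
        intro a ha
        rw [Finset.mem_sdiff, Finset.mem_filter] at ha
        rw [Set.Finite.mem_toFinset]
        have haA := (hAmem a).mp ha.1
        exact ⟨haA.2, fun hnb => ha.2 ⟨ha.1, hnb⟩⟩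
      have h1 : (A \ A.filter (fun a => G.Adj b a)).card ≤ D := by
        calc (A \ A.filter (fun a => G.Adj b a)).card
            ≤ ((Set.toFinite (Vs \ G.neighborSet b)).toFinset).card :=
              Finset.card_le_card hsubd
          _ = (Vs \ G.neighborSet b).ncard :=
              (Set.ncard_eq_toFinset_card _ (Set.toFinite _)).symm
          _ ≤ D := nonnbr Vt Vs hVsN hsVt b hbB.1
      have h2 := Finset.card_sdiff_add_card_eq_card
        (Finset.filter_subset (fun a => G.Adj b a) A)
      omega
  obtain ⟨M, hM1, hM2, hM3⟩ := key_conn_matching H A B hAB D m hAdeg hBdeg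
    (by omega) (by omega) (by omega) (by omega)
  refine ⟨M, hM1, hM2, ?_⟩
  rw [hM3]
  have h2m : (N : ℝ) ≤ ((2 * m : ℕ) : ℝ) := by
    have : N ≤ 2 * m := by omega
    exact_mod_cast this
  rw [← hN]
  exact h2m
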